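/- Let G be a group and let H be a normal subgroup of G with H contained in the commutator subgroup [G,G]. Let S ⊆ H be a generating set for H that is contained in finitely many orbits of the conjugation action of G on H. Suppose there exists h ∈ H and ε > 0 such that cl(hⁿ) ≥ ε·n for infinitely many n (i.e., h has positive stable commutator length in G). Then the word norm on H with respect to S is unbounded; that is, for every C there exists an element of H that is not a product of C or fewer elements of S ∪ S⁻¹ (the Cayley graph of H with respect to S has infinite diameter). -/

import Mathlib

open scoped commutatorElement in
/-- `g` is a product of `n` commutators in `G`. -/
def IsCommProd {G : Type*} [Group G] (n : ℕ) (g : G) : Prop :=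
  ∃ a b : Fin n → G, g = (List.ofFn fun i => ⁅a i, b i⁆).prod

/-- The commutator length of `g`: the smallest `n` such that `g` is a product of
`n` commutators. -/
noncomputable def cl {G : Type*} [Group G] (g : G) : ℕ :=
  sInf {n : ℕ | IsCommProd n g}

/-- `w` is a product of `n` elements of `S ∪ S⁻¹`. -/
def IsWordProd {G : Type*} [Group G] (S : Set G) (n : ℕ) (w : G) : Prop :=
  ∃ f : Fin n → G, (∀ i, f i ∈ S ∪ S⁻¹) ∧ w = (List.ofFn f).prod

/-- The word norm of `w` with respect to the generating set `S`: the smallest `n`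
such that `w` is a product of `n` elements of `S ∪ S⁻¹`. -/
noncomputable def wordNorm {G : Type*} [Group G] (S : Set G) (w : G) : ℕ :=
  sInf {n : ℕ | IsWordProd S n w}

open scoped commutatorElement

lemma isCommProd_iff_list {G : Type*} [Group G] {n : ℕ} {g : G} :
    IsCommProd n g ↔ ∃ l : List G, l.length = n ∧ (∀ x ∈ l, ∃ a b : G, x = ⁅a, b⁆)
      ∧ g = l.prod := by
  constructor
  · rintro ⟨a, b, rfl⟩
    refine ⟨_, List.length_ofFn, ?_, rfl⟩
    intro x hx
    rw [List.mem_ofFn] at hx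
    obtain ⟨i, hi⟩ := hx
    exact ⟨a i, b i, hi.symm⟩
  · rintro ⟨l, rfl, hl, rfl⟩
    have h : ∀ i : Fin l.length, ∃ a b : G, l.get i = ⁅a, b⁆ :=
      fun i => hl _ (List.get_mem l i)
    choose a b hab using h
    refine ⟨a, b, ?_⟩
    have : (List.ofFn fun i => ⁅a i, b i⁆) = l := by
      have : (fun i => ⁅a i, b i⁆) = fun i => l.get i := funext fun i => (hab i).symm
      rw [this, List.ofFn_get]
    rw [this]

lemma isCommProd_one {G : Type*} [Group G] : IsCommProd 0 (1 : G) :=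
  isCommProd_iff_list.2 ⟨[], rfl, by simp, by simp⟩

lemma isCommProd_mul {G : Type*} [Group G] {m n : ℕ} {x y : G}
    (hx : IsCommProd m x) (hy : IsCommProd n y) : IsCommProd (m + n) (x * y) := by
  rw [isCommProd_iff_list] at *
  obtain ⟨l1, hl1, hc1, rfl⟩ := hx
  obtain ⟨l2, hl2, hc2, rfl⟩ := hy
  refine ⟨l1 ++ l2, by simp [hl1, hl2], ?_, by simp⟩
  intro x hx
  rcases List.mem_append.1 hx with h | h
  · exact hc1 x h
  · exact hc2 x h

lemma isCommProd_inv {G : Type*} [Group G] {n : ℕ} {x : G}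
    (hx : IsCommProd n x) : IsCommProd n x⁻¹ := by
  rw [isCommProd_iff_list] at *
  obtain ⟨l, hl, hc, rfl⟩ := hx
  refine ⟨(l.map (·⁻¹)).reverse, by simp [hl], ?_, (List.prod_inv_reverse l)⟩
  intro x hx
  simp only [List.mem_reverse, List.mem_map] at hx
  obtain ⟨y, hy, rfl⟩ := hx
  obtain ⟨a, b, rfl⟩ := hc y hy
  exact ⟨b, a, commutatorElement_inv a b⟩

lemma isCommProd_conj {G : Type*} [Group G] {n : ℕ} {x : G} (g : G)
    (hx : IsCommProd n x) : IsCommProd n (g * x * g⁻¹) := by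
  rw [isCommProd_iff_list] at *
  obtain ⟨l, hl, hc, rfl⟩ := hx
  refine ⟨l.map (fun y => g * y * g⁻¹), by simp [hl], ?_, ?_⟩
  · intro x hx
    simp only [List.mem_map] at hx
    obtain ⟨y, hy, rfl⟩ := hx
    obtain ⟨a, b, rfl⟩ := hc y hy
    exact ⟨g * a * g⁻¹, g * b * g⁻¹, by group⟩
  · have key : ∀ l : List G, (l.map fun y => g * y * g⁻¹).prod = g * l.prod * g⁻¹ := by
      intro l
      induction l with
      | nil => simp
      | cons a l ih =>
        rw [List.map_cons, List.prod_cons, ih, List.prod_cons]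
        group
    exact (key l).symm

lemma isCommProd_mono {G : Type*} [Group G] {m n : ℕ} {x : G}
    (hx : IsCommProd m x) (hmn : m ≤ n) : IsCommProd n x := by
  rw [isCommProd_iff_list] at *
  obtain ⟨l, rfl, hc, rfl⟩ := hx
  refine ⟨l ++ List.replicate (n - l.length) ⁅(1:G), (1:G)⁆, by simp [Nat.add_sub_cancel' hmn], ?_, by simp⟩
  intro x hx
  rcases List.mem_append.1 hx with h | h
  · exact hc x h
  · exact ⟨1, 1, (List.eq_of_mem_replicate h)⟩

lemma exists_isCommProd_of_mem_commutator {G : Type*} [Group G] {x : G}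
    (hx : x ∈ commutator G) : ∃ n, IsCommProd n x := by
  rw [commutator_eq_closure] at hx
  induction hx using Subgroup.closure_induction with
  | mem y hy => obtain ⟨a, b, hab⟩ := hy
                exact ⟨1, isCommProd_iff_list.2 ⟨[y], rfl, by intro z hz; rw [List.mem_singleton] at hz; exact ⟨a, b, hz ▸ hab.symm⟩, by simp⟩⟩
  | one => exact ⟨0, isCommProd_one⟩
  | mul a b _ _ ha hb => obtain ⟨m, hm⟩ := ha; obtain ⟨n, hn⟩ := hb
                         exact ⟨m + n, isCommProd_mul hm hn⟩
  | inv a _ ha => obtain ⟨m, hm⟩ := ha; exact ⟨m, isCommProd_inv hm⟩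

/-- If `H ⊴ G` lies in `[G,G]`, `S` generates `H` and lies in finitely many
`G`-conjugacy orbits, and some `h ∈ H` has positive stable commutator length in `G`
(i.e. `cl (h ^ n) ≥ ε * n` for infinitely many `n`), then the word norm on `H` with
respect to `S` is unbounded: for every `C` there is an element of `H` that is not a
product of `C` or fewer elements of `S ∪ S⁻¹`. -/
theorem wordNorm_unbounded_of_positive_scl {G : Type*} [Group G] (H : Subgroup G)
    [H.Normal] (hHcomm : H ≤ commutator G) (S : Set G) (hSH : S ⊆ (H : Set G))
    (hSgen : Subgroup.closure S = H)
    (T : Finset G) (hTS : (T : Set G) ⊆ S)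
    (horb : ∀ s ∈ S, ∃ g : G, ∃ t ∈ T, s = g * t * g⁻¹)
    (h : G) (hh : h ∈ H) (ε : ℝ) (hε : 0 < ε)
    (hscl : ∀ N : ℕ, ∃ n ≥ N, ε * n ≤ (cl (h ^ n) : ℝ)) :
    ∀ C : ℕ, ∃ w ∈ H, ∀ n ≤ C, ¬ IsWordProd S n w := by
  intro C
  have hT : ∀ t ∈ T, ∃ n, IsCommProd n t :=
    fun t ht => exists_isCommProd_of_mem_commutator (hHcomm (hSH (hTS ht)))
  choose! N hN using hT
  set K := T.sup N with hK
  have hSbound : ∀ s ∈ S ∪ S⁻¹, IsCommProd K s := by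
    intro s hs
    rcases hs with hs | hs
    · obtain ⟨g, t, ht, rfl⟩ := horb s hs
      exact isCommProd_conj g (isCommProd_mono (hN t ht) (Finset.le_sup ht))
    · have hs' : s⁻¹ ∈ S := hs
      obtain ⟨g, t, ht, heq⟩ := horb s⁻¹ hs'
      have h2 := isCommProd_conj g (isCommProd_mono (hN t ht) (Finset.le_sup ht))
      rw [← heq] at h2
      simpa using isCommProd_inv h2
  have hword : ∀ m (w : G), IsWordProd S m w → IsCommProd (m * K) w := by
    intro m
    induction m with
    | zero =>
      rintro w ⟨f, hf, rfl⟩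
      simpa using isCommProd_one
    | succ m ih =>
      rintro w ⟨f, hf, rfl⟩
      rw [List.ofFn_succ, List.prod_cons]
      have h1 : IsCommProd K (f 0) := hSbound _ (hf 0)
      have h2 : IsCommProd (m * K) (List.ofFn (fun i => f i.succ)).prod :=
        ih _ ⟨fun i => f i.succ, fun i => hf _, rfl⟩
      exact isCommProd_mono (isCommProd_mul h1 h2) (le_of_eq (by ring))
  obtain ⟨n, hnN, hncl⟩ := hscl (⌈((C * K : ℕ) : ℝ) / ε⌉₊ + 1)
  refine ⟨h ^ n, H.pow_mem hh n, ?_⟩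
  intro m hm hwp
  have hcl : cl (h ^ n) ≤ C * K :=
    le_trans (Nat.sInf_le (hword m _ hwp)) (Nat.mul_le_mul_right K hm)
  have h1 : (cl (h ^ n) : ℝ) ≤ ((C * K : ℕ) : ℝ) := by exact_mod_cast hcl
  have h2 : ((C * K : ℕ) : ℝ) / ε < (n : ℝ) := by
    calc ((C * K : ℕ) : ℝ) / ε ≤ ⌈((C * K : ℕ) : ℝ) / ε⌉₊ := Nat.le_ceil _
      _ < (n : ℝ) := by exact_mod_cast Nat.lt_of_succ_le hnN
  have h3 : ((C * K : ℕ) : ℝ) < ε * n := by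
    rw [div_lt_iff₀ hε] at h2
    linarith
  linarith
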